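/- Let G be a connected weighted graph on a finite vertex set V with |V| = n and Laplacian L, and let Z be a Moore–Penrose pseudoinverse of L. Then the sum over edges e = {u,v} of G of the leverage scores, Σ_{edges {u,v}} w(u,v) · (χ_u − χ_v)ᵀ Z (χ_u − χ_v), equals n − 1. -/

import Mathlib

open Matrix

variable {V : Type*}

/-- The Laplacian of a weighted graph. -/
noncomputable def lap [Fintype V] [DecidableEq V] (w : V → V → ℝ) : Matrix V V ℝ :=
  Matrix.of fun u v => if u = v then ∑ z, w u z else - w u v

section
variable [Fintype V] [DecidableEq V] (w : V → V → ℝ)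

lemma lap_apply (hw_diag : ∀ u, w u u = 0) (u v : V) :
    lap w u v = (if u = v then ∑ z, w u z else 0) - w u v := by
  by_cases h : u = v
  · subst h; simp [lap, hw_diag u]
  · simp [lap, h]

lemma quad_form (hw_symm : ∀ u v, w u v = w v u) (hw_diag : ∀ u, w u u = 0) (x : V → ℝ) :
    x ⬝ᵥ (lap w).mulVec x = (1/2) * ∑ u, ∑ v, w u v * (x u - x v) ^ 2 := by
  have swap : ∀ f : V → V → ℝ, ∑ u, ∑ v, w u v * f u v = ∑ u, ∑ v, w u v * f v u := by
    intro f
    rw [Finset.sum_comm]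
    exact Finset.sum_congr rfl fun u _ => Finset.sum_congr rfl fun v _ => by rw [hw_symm]
  have lhs : x ⬝ᵥ (lap w).mulVec x
      = ∑ u, ∑ v, (x u * ((if u = v then ∑ z, w u z else 0) * x v) - w u v * (x u * x v)) := by
    simp only [dotProduct, mulVec, lap_apply w hw_diag]
    refine Finset.sum_congr rfl fun u _ => ?_
    rw [Finset.mul_sum]
    refine Finset.sum_congr rfl fun v _ => by ring
  have diag : ∀ u : V, ∑ v, x u * ((if u = v then ∑ z, w u z else 0) * x v)
      = ∑ v, w u v * (x u * x u) := by
    intro u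
    rw [Finset.sum_eq_single u (by intro b _ hb; simp [Ne.symm hb]) (by simp), if_pos rfl,
      Finset.sum_mul, Finset.mul_sum]
    exact Finset.sum_congr rfl fun v _ => by ring
  have expand : ∀ u v : V, w u v * (x u - x v) ^ 2 = w u v * (x u * x u) + w u v * (x v * x v)
      - w u v * (x u * x v) - w u v * (x v * x u) := fun u v => by ring
  have e1 : ∑ u, ∑ v, w u v * (x v * x v) = ∑ u, ∑ v, w u v * (x u * x u) := by
    rw [Finset.sum_comm]
    exact Finset.sum_congr rfl fun u _ => Finset.sum_congr rfl fun v _ => by rw [hw_symm]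
  have e2 : ∑ u, ∑ v, w u v * (x v * x u) = ∑ u, ∑ v, w u v * (x u * x v) := by
    rw [Finset.sum_comm]
    exact Finset.sum_congr rfl fun u _ => Finset.sum_congr rfl fun v _ => by rw [hw_symm]
  rw [lhs]
  simp only [Finset.sum_sub_distrib, diag, expand, Finset.sum_add_distrib]
  rw [e1, e2]
  ring

lemma lap_mulVec_one (hw_diag : ∀ u, w u u = 0) :
    (lap w).mulVec (fun _ => (1:ℝ)) = 0 := by
  funext u
  simp only [mulVec, dotProduct, lap_apply w hw_diag, mul_one, Pi.zero_apply,
    Finset.sum_sub_distrib]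
  rw [Finset.sum_ite_eq Finset.univ u (fun _ => ∑ z, w u z)]
  simp

lemma ker_const (hw_symm : ∀ u v, w u v = w v u) (hw_nonneg : ∀ u v, 0 ≤ w u v)
    (hw_diag : ∀ u, w u u = 0)
    (hconn : (SimpleGraph.fromRel fun u v => 0 < w u v).Connected)
    (x : V → ℝ) (hx : (lap w).mulVec x = 0) : ∀ u v, x u = x v := by
  have hquad : ∑ u, ∑ v, w u v * (x u - x v) ^ 2 = 0 := by
    have h0 : x ⬝ᵥ (lap w).mulVec x = 0 := by rw [hx]; simp
    rw [quad_form w hw_symm hw_diag x] at h0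
    linarith
  have hterm : ∀ u v : V, w u v * (x u - x v) ^ 2 = 0 := by
    have h1 := (Finset.sum_eq_zero_iff_of_nonneg (fun u _ =>
      Finset.sum_nonneg fun v _ => mul_nonneg (hw_nonneg u v) (sq_nonneg _))).mp hquad
    intro u v
    exact (Finset.sum_eq_zero_iff_of_nonneg (fun v _ =>
      mul_nonneg (hw_nonneg u v) (sq_nonneg _))).mp (h1 u (Finset.mem_univ u)) v
      (Finset.mem_univ v)
  have hadj : ∀ u v : V, 0 < w u v → x u = x v := by
    intro u v hpos
    have := hterm u v
    have h2 : (x u - x v) ^ 2 = 0 := by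
      rcases mul_eq_zero.mp this with h | h
      · exact absurd h (ne_of_gt hpos)
      · exact h
    have := pow_eq_zero_iff (n := 2) (by norm_num) |>.mp h2
    linarith
  intro u v
  obtain ⟨p⟩ := hconn.preconnected u v
  induction p with
  | nil => rfl
  | cons h p ih =>
    rw [SimpleGraph.fromRel_adj] at h
    obtain ⟨-, h1 | h1⟩ := h
    · exact (hadj _ _ h1).trans ih
    · exact ((hadj _ _ h1).symm).trans ih
end

section
variable [Fintype V] [DecidableEq V] (w : V → V → ℝ)

lemma ker_lap (hw_symm : ∀ u v, w u v = w v u) (hw_nonneg : ∀ u v, 0 ≤ w u v)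
    (hw_diag : ∀ u, w u u = 0)
    (hconn : (SimpleGraph.fromRel fun u v => 0 < w u v).Connected) :
    LinearMap.ker (lap w).mulVecLin = Submodule.span ℝ {(fun _ => 1 : V → ℝ)} := by
  apply le_antisymm
  · intro x hx
    have hx' : (lap w).mulVec x = 0 := hx
    have hc := ker_const w hw_symm hw_nonneg hw_diag hconn x hx'
    have hne : Nonempty V := hconn.nonempty
    obtain ⟨v₀⟩ := hne
    have : x = x v₀ • (fun _ => 1 : V → ℝ) := by
      funext u; simp [hc u v₀]
    rw [this]
    exact Submodule.smul_mem _ _ (Submodule.mem_span_singleton_self _)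
  · rw [Submodule.span_singleton_le_iff_mem]
    exact lap_mulVec_one w hw_diag

lemma finrank_ker_lap (hw_symm : ∀ u v, w u v = w v u) (hw_nonneg : ∀ u v, 0 ≤ w u v)
    (hw_diag : ∀ u, w u u = 0)
    (hconn : (SimpleGraph.fromRel fun u v => 0 < w u v).Connected) :
    Module.finrank ℝ (LinearMap.ker (lap w).mulVecLin) = 1 := by
  rw [ker_lap w hw_symm hw_nonneg hw_diag hconn]
  refine finrank_span_singleton ?_
  have hne : Nonempty V := hconn.nonempty
  obtain ⟨v₀⟩ := hne
  intro h
  have := congrFun h v₀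
  simp at this

lemma rank_lap (hw_symm : ∀ u v, w u v = w v u) (hw_nonneg : ∀ u v, 0 ≤ w u v)
    (hw_diag : ∀ u, w u u = 0)
    (hconn : (SimpleGraph.fromRel fun u v => 0 < w u v).Connected) :
    (lap w).rank = Fintype.card V - 1 := by
  have h := LinearMap.finrank_range_add_finrank_ker (lap w).mulVecLin
  rw [finrank_ker_lap w hw_symm hw_nonneg hw_diag hconn] at h
  have : Module.finrank ℝ (V → ℝ) = Fintype.card V := Module.finrank_pi ℝ
  rw [this] at h
  unfold Matrix.rank
  omega

end

section
variable [Fintype V] [DecidableEq V]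

lemma trace_of_idem (P : Matrix V V ℝ) (hP : P * P = P) :
    Matrix.trace P = (P.rank : ℝ) := by
  set f := P.mulVecLin with hf
  have hff : f ∘ₗ f = f := by rw [hf, ← Matrix.mulVecLin_mul, hP]
  have hproj : LinearMap.IsProj (LinearMap.range f) f := by
    constructor
    · intro x; exact LinearMap.mem_range_self f x
    · rintro x ⟨y, rfl⟩
      exact congrFun (congrArg DFunLike.coe hff) y
  have htr : LinearMap.trace ℝ (V → ℝ) f = (Module.finrank ℝ (LinearMap.range f) : ℝ) :=
    hproj.trace
  have hmat : LinearMap.trace ℝ (V → ℝ) f = Matrix.trace P := by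
    rw [LinearMap.trace_eq_matrix_trace ℝ (Pi.basisFun ℝ V) f]
    congr 1
    rw [LinearMap.toMatrix_eq_toMatrix']
    have : f = Matrix.toLin' P := by
      ext x
      simp [hf, Matrix.mulVecLin_apply, Matrix.toLin'_apply]
    rw [this, LinearMap.toMatrix'_toLin']
  rw [← hmat, htr]
  rfl
end

/-- Sum over the edges `{u,v}` (each counted once, since `w` is symmetric and each
ordered pair is counted twice) of the leverage scores is `n - 1`. -/
theorem sum_leverage_scores_eq [Fintype V] [DecidableEq V]
    (w : V → V → ℝ) (hw_symm : ∀ u v, w u v = w v u) (hw_nonneg : ∀ u v, 0 ≤ w u v)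
    (hw_diag : ∀ u, w u u = 0)
    (hconn : (SimpleGraph.fromRel fun u v => 0 < w u v).Connected)
    (Z : Matrix V V ℝ)
    (hZ1 : lap w * Z * lap w = lap w) (hZ2 : Z * lap w * Z = Z)
    (hZ3 : (lap w * Z)ᵀ = lap w * Z) (hZ4 : (Z * lap w)ᵀ = Z * lap w) :
    (1 / 2) * ∑ u, ∑ v, w u v *
        ((Pi.single u 1 - Pi.single v 1) ⬝ᵥ Z.mulVec (Pi.single u 1 - Pi.single v 1)) =
      (Fintype.card V : ℝ) - 1 := by
  have hterm : ∀ u v : V, ((Pi.single u 1 - Pi.single v 1 : V → ℝ) ⬝ᵥ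
      Z.mulVec (Pi.single u 1 - Pi.single v 1)) = Z u u + Z v v - Z u v - Z v u := by
    intro u v
    simp only [Matrix.mulVec_sub, Matrix.mulVec_single, sub_dotProduct, dotProduct_sub,
      single_dotProduct, mul_one, one_mul, MulOpposite.op_one, one_smul, Matrix.col_apply]
    ring
  have htr : Matrix.trace (lap w * Z)
      = (∑ u, ∑ v, w u v * Z u u) - ∑ u, ∑ v, w u v * Z v u := by
    simp only [Matrix.trace, Matrix.diag, Matrix.mul_apply, lap_apply w hw_diag, sub_mul,
      Finset.sum_sub_distrib]
    congr 1
    refine Finset.sum_congr rfl fun u _ => ?_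
    rw [Finset.sum_eq_single u (by intro b _ hb; simp [Ne.symm hb]) (by simp), if_pos rfl,
      Finset.sum_mul]
  have e1 : ∑ u, ∑ v, w u v * Z v v = ∑ u, ∑ v, w u v * Z u u := by
    rw [Finset.sum_comm]
    exact Finset.sum_congr rfl fun u _ => Finset.sum_congr rfl fun v _ => by rw [hw_symm]
  have e2 : ∑ u, ∑ v, w u v * Z u v = ∑ u, ∑ v, w u v * Z v u := by
    rw [Finset.sum_comm]
    exact Finset.sum_congr rfl fun u _ => Finset.sum_congr rfl fun v _ => by rw [hw_symm]
  have hlhs : (1 / 2 : ℝ) * ∑ u, ∑ v, w u v *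
      ((Pi.single u 1 - Pi.single v 1) ⬝ᵥ Z.mulVec (Pi.single u 1 - Pi.single v 1))
      = Matrix.trace (lap w * Z) := by
    simp only [hterm]
    have expand : ∀ u v : V, w u v * (Z u u + Z v v - Z u v - Z v u)
        = w u v * Z u u + w u v * Z v v - w u v * Z u v - w u v * Z v u := fun u v => by ring
    simp only [expand, Finset.sum_add_distrib, Finset.sum_sub_distrib]
    rw [e1, e2, htr]
    ring
  have hidem : (lap w * Z) * (lap w * Z) = lap w * Z := by
    rw [← mul_assoc, hZ1]
  have hrank : (lap w * Z).rank = (lap w).rank := by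
    refine le_antisymm (Matrix.rank_mul_le_left _ _) ?_
    conv_lhs => rw [← hZ1]
    exact Matrix.rank_mul_le_left _ _
  have hcard : 1 ≤ Fintype.card V := @Fintype.card_pos _ _ hconn.nonempty
  rw [hlhs, trace_of_idem _ hidem, hrank, rank_lap w hw_symm hw_nonneg hw_diag hconn,
    Nat.cast_sub hcard, Nat.cast_one]
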